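/- arXiv:2103.04018 — 2 statements merged into one kernel-verified Lean document; each statement's English description precedes it below -/
import Mathlib

section
/- Let j, k, n, s, t, o, h be positive integers with j, k ≥ 1, n ≥ max(j,k), o ≥ 2 even, s ≤ t, n = o/2 + t + s − 1, h = j+k+n+1, t+k ≥ s+j, and j+k+1 ≤ ⌊h/2⌋. Define Φ₁ = 6·[2(j+1)(n−k) + 2(k+1)(n−j) + o·(t+k−s−j) + 4∑_{i=1}^{j}(h+1−2i) + 4∑_{i=1}^{k}(h+1−2i) + 2∑_{i=1}^{j}(h−2i) + 2∑_{i=1}^{k}(h−2i)] and Φ₂ = 6·[(o+2(j+k))·(t−s) + 4∑_{i=1}^{j+k+1}|h+1−2i| + 2∑_{i=1}^{j+k}|h−2i|]. Then Φ₁ − Φ₂ = 12·(ok + 2(k+j)s + 4kj) > 0. -/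
open Finset

lemma sum_lin (c : ℤ) : ∀ m : ℕ, ∑ i ∈ Finset.Icc 1 m, (c - 2 * (i : ℤ)) =
    m * c - m * (m + 1) := by
  intro m
  induction m with
  | zero => simp
  | succ m ih =>
      rw [Finset.sum_Icc_succ_top (by omega)]
      push_cast
      rw [ih]; ring

/-- Subcase 1.1 of Lemma 3.3: the difference of the two cut contributions equals
`12(ok + 2(k+j)s + 4kj) > 0`. -/
theorem lemma33_subcase11 (j k n s t o h : ℕ)
    (hj : 1 ≤ j) (hk : 1 ≤ k) (hs : 1 ≤ s) (ht : 1 ≤ t) (ho2 : 2 ≤ o) (hoe : Even o)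
    (hn : n ≥ max j k) (hst : s ≤ t) (hneq : (n : ℤ) = (o : ℤ) / 2 + (t : ℤ) + (s : ℤ) - 1)
    (hh : h = j + k + n + 1) (htk : s + j ≤ t + k) (hjk : j + k + 1 ≤ h / 2) :
    (6 * (2 * ((j : ℤ) + 1) * ((n : ℤ) - (k : ℤ)) +
          2 * ((k : ℤ) + 1) * ((n : ℤ) - (j : ℤ)) +
          (o : ℤ) * ((t : ℤ) + (k : ℤ) - (s : ℤ) - (j : ℤ)) +
          4 * ∑ i ∈ Finset.Icc 1 j, ((h : ℤ) + 1 - 2 * (i : ℤ)) +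
          4 * ∑ i ∈ Finset.Icc 1 k, ((h : ℤ) + 1 - 2 * (i : ℤ)) +
          2 * ∑ i ∈ Finset.Icc 1 j, ((h : ℤ) - 2 * (i : ℤ)) +
          2 * ∑ i ∈ Finset.Icc 1 k, ((h : ℤ) - 2 * (i : ℤ)))) -
      (6 * (((o : ℤ) + 2 * ((j : ℤ) + (k : ℤ))) * ((t : ℤ) - (s : ℤ)) +
          4 * ∑ i ∈ Finset.Icc 1 (j + k + 1), |(h : ℤ) + 1 - 2 * (i : ℤ)| +
          2 * ∑ i ∈ Finset.Icc 1 (j + k), |(h : ℤ) - 2 * (i : ℤ)|)) =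
      12 * ((o : ℤ) * (k : ℤ) + 2 * ((k : ℤ) + (j : ℤ)) * (s : ℤ) + 4 * (k : ℤ) * (j : ℤ)) ∧
    (0 : ℤ) <
      12 * ((o : ℤ) * (k : ℤ) + 2 * ((k : ℤ) + (j : ℤ)) * (s : ℤ) + 4 * (k : ℤ) * (j : ℤ)) := by
  have h2 : 2 * (j + k + 1) ≤ h := by
    have := Nat.div_mul_le_self h 2
    omega
  have habs1 : ∑ i ∈ Finset.Icc 1 (j + k + 1), |(h : ℤ) + 1 - 2 * (i : ℤ)| =
      ∑ i ∈ Finset.Icc 1 (j + k + 1), ((h : ℤ) + 1 - 2 * (i : ℤ)) := by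
    refine Finset.sum_congr rfl fun i hi => ?_
    rw [Finset.mem_Icc] at hi
    have : (i : ℤ) ≤ (j : ℤ) + k + 1 := by exact_mod_cast hi.2
    have hhc : (2 : ℤ) * ((j : ℤ) + k + 1) ≤ (h : ℤ) := by exact_mod_cast h2
    exact abs_of_nonneg (by linarith)
  have habs2 : ∑ i ∈ Finset.Icc 1 (j + k), |(h : ℤ) - 2 * (i : ℤ)| =
      ∑ i ∈ Finset.Icc 1 (j + k), ((h : ℤ) - 2 * (i : ℤ)) := by
    refine Finset.sum_congr rfl fun i hi => ?_
    rw [Finset.mem_Icc] at hi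
    have : (i : ℤ) ≤ (j : ℤ) + k := by exact_mod_cast hi.2
    have hhc : (2 : ℤ) * ((j : ℤ) + k + 1) ≤ (h : ℤ) := by exact_mod_cast h2
    exact abs_of_nonneg (by linarith)
  obtain ⟨m, hm⟩ := hoe
  have ho : (o : ℤ) = 2 * ((n : ℤ) - t - s + 1) := by omega
  have hhz : (h : ℤ) = (j : ℤ) + k + n + 1 := by exact_mod_cast hh
  constructor
  · rw [habs1, habs2]
    have e1 := sum_lin ((h : ℤ) + 1)
    have e2 := sum_lin ((h : ℤ))
    rw [e1 j, e1 k, e1 (j + k + 1), e2 j, e2 k, e2 (j + k)]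
    push_cast
    rw [hhz]
    linear_combination (-6 * ((j : ℤ) + k)) * ho
  · have hjz : (1 : ℤ) ≤ (j : ℤ) := by exact_mod_cast hj
    have hkz : (1 : ℤ) ≤ (k : ℤ) := by exact_mod_cast hk
    have hsz : (1 : ℤ) ≤ (s : ℤ) := by exact_mod_cast hs
    have hoz : (2 : ℤ) ≤ (o : ℤ) := by exact_mod_cast ho2
    nlinarith
end

section
/- Let j, k, n be positive integers with 1 ≤ j ≤ k ≤ n, h = j+k+n+1, and n ≥ ⌊h/2⌋+1. Then Mo(P_L(j,k,n)) − Mo(C_L(2,h−3)) = 24·((j+n)(k−2) + k(j−1) + 2); this is positive when k ≥ 2, and when j = k = 1 (with n ≥ 4) it equals 24(1−n) < 0. -/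
open Finset

/-- The Mostar index of the tree-like phenylene `P_L(j,k,n)`, via the cut method. -/
def MoPL (j k n : ℕ) : ℤ :=
  let h : ℕ := j + k + n + 1
  6 * (2 * ((j : ℤ) + 1) * ((n : ℤ) - (k : ℤ)) +
       2 * ((k : ℤ) + 1) * ((n : ℤ) - (j : ℤ)) +
       2 * ((n : ℤ) + 1) * ((k : ℤ) - (j : ℤ)) +
       4 * ∑ i ∈ Finset.Icc 1 j, ((h : ℤ) + 1 - 2 * (i : ℤ)) +
       4 * ∑ i ∈ Finset.Icc 1 k, ((h : ℤ) + 1 - 2 * (i : ℤ)) +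
       4 * ∑ i ∈ Finset.Icc 1 n, |(h : ℤ) + 1 - 2 * (i : ℤ)| +
       2 * ∑ i ∈ Finset.Icc 1 j, ((h : ℤ) - 2 * (i : ℤ)) +
       2 * ∑ i ∈ Finset.Icc 1 k, ((h : ℤ) - 2 * (i : ℤ)) +
       2 * ∑ i ∈ Finset.Icc 1 n, |(h : ℤ) - 2 * (i : ℤ)|)

/-- The Mostar index of the phenylene chain `C_L(2, h−3)` (closed form). -/
def MoCL2 (h : ℕ) : ℤ :=
  72 * ((h / 2 : ℕ) : ℤ) * (((h + 1) / 2 : ℕ) : ℤ) - 24 * ((h / 2 : ℕ) : ℤ) +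
    48 * ((h : ℤ) - 2)

lemma sum1 (A : ℤ) : ∀ m : ℕ, ∑ i ∈ Finset.Icc 1 m, (A - 2*(i:ℤ)) = m*A - m*(m+1)
  | 0 => by simp
  | m+1 => by
      rw [Finset.sum_Icc_succ_top (Nat.succ_le_succ (Nat.zero_le m)), sum1 A m]
      push_cast; ring

lemma sumAbs (A : ℤ) (t : ℕ) (h1 : 2*(t:ℤ) ≤ A) (h2 : A ≤ 2*t+1) :
    ∀ n : ℕ, t ≤ n → ∑ i ∈ Finset.Icc 1 n, |A - 2*(i:ℤ)| =
      2*((t:ℤ)*A - t*(t+1)) - ((n:ℤ)*A - n*(n+1)) := by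
  intro n hn
  induction n, hn using Nat.le_induction with
  | base =>
      have : ∑ i ∈ Finset.Icc 1 t, |A - 2*(i:ℤ)| = ∑ i ∈ Finset.Icc 1 t, (A - 2*(i:ℤ)) := by
        refine Finset.sum_congr rfl fun i hi => abs_of_nonneg ?_
        have := (Finset.mem_Icc.mp hi).2
        have : (i:ℤ) ≤ t := by exact_mod_cast this
        linarith
      rw [this, sum1]; ring
  | succ m hm ih =>
      rw [Finset.sum_Icc_succ_top (Nat.succ_le_succ (Nat.zero_le m)), ih]
      have hneg : A - 2*((m+1:ℕ):ℤ) < 0 := by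
        have : (t:ℤ) ≤ m := by exact_mod_cast hm
        push_cast; linarith
      rw [abs_of_neg hneg]; push_cast; ring

/-- Case 2 of Lemma 5.2: for `n ≥ ⌊h/2⌋+1`,
`Mo(P_L(j,k,n)) − Mo(C_L(2,h−3)) = 24((j+n)(k−2) + k(j−1) + 2)`, positive when `k ≥ 2`,
and equal to `24(1−n) < 0` when `j = k = 1` with `n ≥ 4`. -/
theorem lemma52_case2 (j k n h : ℕ) (hj : 1 ≤ j) (hjk : j ≤ k) (hkn : k ≤ n)
    (hh : h = j + k + n + 1) (hn : h / 2 + 1 ≤ n) :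
    MoPL j k n - MoCL2 h =
      24 * (((j : ℤ) + (n : ℤ)) * ((k : ℤ) - 2) + (k : ℤ) * ((j : ℤ) - 1) + 2) ∧
    (2 ≤ k →
      (0 : ℤ) < 24 * (((j : ℤ) + (n : ℤ)) * ((k : ℤ) - 2) + (k : ℤ) * ((j : ℤ) - 1) + 2)) ∧
    (j = 1 → k = 1 → 4 ≤ n →
      24 * (((j : ℤ) + (n : ℤ)) * ((k : ℤ) - 2) + (k : ℤ) * ((j : ℤ) - 1) + 2) =
        24 * (1 - (n : ℤ)) ∧ 24 * (1 - (n : ℤ)) < 0) := by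
  refine ⟨?_, ?_, ?_⟩
  · subst hh
    set H := j + k + n + 1 with hH
    have h1 : 2*(((H+1)/2 : ℕ):ℤ) ≤ (H:ℤ)+1 := by omega
    have h2 : (H:ℤ)+1 ≤ 2*(((H+1)/2 : ℕ):ℤ)+1 := by omega
    have h3 : 2*(((H/2 : ℕ)):ℤ) ≤ (H:ℤ) := by omega
    have h4 : (H:ℤ) ≤ 2*(((H/2 : ℕ)):ℤ)+1 := by omega
    have htn1 : (H+1)/2 ≤ n := by omega
    have htn2 : H/2 ≤ n := by omega
    rw [MoPL, MoCL2]
    rw [← hH]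
    rw [sum1 ((H:ℤ)+1) j, sum1 ((H:ℤ)+1) k, sum1 ((H:ℤ)) j, sum1 ((H:ℤ)) k,
        sumAbs ((H:ℤ)+1) ((H+1)/2) h1 h2 n htn1, sumAbs ((H:ℤ)) (H/2) h3 h4 n htn2]
    rcases Nat.even_or_odd H with ⟨q, hq⟩ | ⟨q, hq⟩
    · have e1 : H/2 = q := by omega
      have e2 : (H+1)/2 = q := by omega
      have eH : (H:ℤ) = 2*q := by omega
      have hrel : (n:ℤ) = 2*q - j - k - 1 := by
        have : (H:ℤ) = (j:ℤ)+k+n+1 := by push_cast [hH]; ring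
        linarith
      rw [e1, e2, eH, hrel]; ring
    · have e1 : H/2 = q := by omega
      have e2 : (H+1)/2 = q+1 := by omega
      have eH : (H:ℤ) = 2*q+1 := by omega
      have hrel : (n:ℤ) = 2*q - j - k := by
        have : (H:ℤ) = (j:ℤ)+k+n+1 := by push_cast [hH]; ring
        linarith
      rw [e1, e2, eH, hrel]; push_cast; ring
  · intro hk
    have hj' : (1:ℤ) ≤ j := by exact_mod_cast hj
    have hk' : (2:ℤ) ≤ k := by exact_mod_cast hk
    have hn' : (k:ℤ) ≤ n := by exact_mod_cast hkn
    nlinarith [mul_nonneg (by linarith : (0:ℤ) ≤ (j:ℤ)+n) (by linarith : (0:ℤ) ≤ (k:ℤ)-2),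
      mul_nonneg (by linarith : (0:ℤ) ≤ (k:ℤ)) (by linarith : (0:ℤ) ≤ (j:ℤ)-1)]
  · rintro rfl rfl hn4
    have : (4:ℤ) ≤ n := by exact_mod_cast hn4
    constructor
    · push_cast; ring
    · linarith
end
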